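/- Let T(x) = √(1-2x), H₀(x) = 1/40 − T²/12 + T⁴/8 − T⁵/15, H₁(x) = (1/24)log(1/T) + (1/24)(1−T), and H₂(x) = (7/1440)·T^{−5} + (5/1152)·T^{−4} + (7/5760)·T^{−3} for 0 < x < 1/2. Then x·H₂'' + (5/2)·H₂' − (1/2)·H₀''·H₂'' − (1/4)·(H₁'')² − (1/24)·H₁'''' = 0. -/

import Mathlib

set_option maxHeartbeats 1000000

noncomputable def H0 : ℝ → ℝ := fun x =>
  1/40 - (Real.sqrt (1 - 2*x))^2/12 + (Real.sqrt (1 - 2*x))^4/8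
    - (Real.sqrt (1 - 2*x))^5/15

noncomputable def H1 : ℝ → ℝ := fun x =>
  (1/24) * Real.log (1 / Real.sqrt (1 - 2*x)) + (1/24) * (1 - Real.sqrt (1 - 2*x))

noncomputable def H2 : ℝ → ℝ := fun x =>
  (7/1440) / (Real.sqrt (1 - 2*x))^5 + (5/1152) / (Real.sqrt (1 - 2*x))^4
    + (7/5760) / (Real.sqrt (1 - 2*x))^3

namespace MVAux

noncomputable def s : ℝ → ℝ := fun x => Real.sqrt (1 - 2*x)

lemma s_pos {y : ℝ} (hy : y < 1/2) : 0 < s y :=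
  Real.sqrt_pos.mpr (by norm_num [s]; linarith)

lemma s_ne {y : ℝ} (hy : y < 1/2) : s y ≠ 0 := (s_pos hy).ne'

lemma s_sq {y : ℝ} (hy : y < 1/2) : (s y)^2 = 1 - 2*y :=
  Real.sq_sqrt (by linarith)

lemma hasDerivAt_s {y : ℝ} (hy : y < 1/2) :
    HasDerivAt s (-(s y)⁻¹) y := by
  have h0 : (0:ℝ) < 1 - 2*y := by linarith
  have h1 : HasDerivAt (fun x : ℝ => 1 - 2*x) (-2) y := by
    exact ((hasDerivAt_const y (1:ℝ)).sub ((hasDerivAt_id y).const_mul 2)).congr_deriv (by norm_num)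
  have h2 := h1.sqrt h0.ne'
  have hs : Real.sqrt (1 - 2*y) ≠ 0 := Real.sqrt_ne_zero'.mpr h0
  have heq : -(Real.sqrt (1-2*y))⁻¹ = -2 / (2 * Real.sqrt (1-2*y)) := by
    field_simp
  unfold s
  rw [heq]
  exact h2

/-- derivative of (s x)^n : -n * (s y)^(n-2), stated as HasDerivAt -/
lemma hasDerivAt_s_pow {y : ℝ} (hy : y < 1/2) (n : ℕ) :
    HasDerivAt (fun x => (s x)^n) (-(n * (s y)^(n-1) * (s y)⁻¹)) y := by
  have := (hasDerivAt_s hy).pow n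
  refine this.congr_deriv ?_
  ring

lemma hasDerivAt_s_pow_inv {y : ℝ} (hy : y < 1/2) (n : ℕ) :
    HasDerivAt (fun x => ((s x)^n)⁻¹) (n * ((s y)^(n+2))⁻¹) y := by
  have := (hasDerivAt_s_pow hy n).inv (pow_ne_zero n (s_ne hy))
  refine this.congr_deriv ?_
  have hne := s_ne hy
  field_simp
  cases n with
  | zero => simp
  | succ m =>
    have : m + 1 - 1 = m := rfl
    rw [this]
    ring

/-- level-1 step: turn a pointwise formula on Iio (1/2) into a deriv formula -/
lemma step {F G K : ℝ → ℝ} (hFG : ∀ y, y < (1/2:ℝ) → F y = G y)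
    (hGK : ∀ y, y < (1/2:ℝ) → HasDerivAt G (K y) y) :
    ∀ y, y < (1/2:ℝ) → deriv F y = K y := by
  intro y hy
  have hev : F =ᶠ[nhds y] G := by
    filter_upwards [Iio_mem_nhds hy] with z hz using hFG z hz
  rw [hev.deriv_eq]
  exact (hGK y hy).deriv

end MVAux

open MVAux in
theorem stmt5 (x : ℝ) (hx0 : 0 < x) (hx : x < 1/2) :
    x * iteratedDeriv 2 H2 x + (5/2) * deriv H2 x
      - (1/2) * iteratedDeriv 2 H0 x * iteratedDeriv 2 H2 x
      - (1/4) * (iteratedDeriv 2 H1 x)^2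
      - (1/24) * iteratedDeriv 4 H1 x = 0 := by
  -- closed forms for derivatives
  -- H0' = 1/6 - s^2/2 + s^3/3, H0'' = 1 - s
  have hH0 : ∀ y, y < (1/2:ℝ) → HasDerivAt H0
      (1/6 - (s y)^2/2 + (s y)^3/3) y := by
    intro y hy
    have h2 := hasDerivAt_s_pow hy 2
    have h4 := hasDerivAt_s_pow hy 4
    have h5 := hasDerivAt_s_pow hy 5
    have := (((hasDerivAt_const y (1/40:ℝ)).sub (h2.div_const 12)).add
      (h4.div_const 8)).sub (h5.div_const 15)
    have hne := s_ne hy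
    refine this.congr_deriv ?_
    push_cast
    norm_num
    have hne2 := hne
    field_simp
    ring
  have hH0' : ∀ y, y < (1/2:ℝ) → HasDerivAt (fun y => 1/6 - (s y)^2/2 + (s y)^3/3)
      (1 - s y) y := by
    intro y hy
    have h2 := hasDerivAt_s_pow hy 2
    have h3 := hasDerivAt_s_pow hy 3
    have := ((hasDerivAt_const y (1/6:ℝ)).sub (h2.div_const 2)).add (h3.div_const 3)
    have hne := s_ne hy
    refine this.congr_deriv ?_
    field_simp
    ring
  -- H1 rewrite : H1 = -(1/24) log s + (1/24)(1-s)
  have hH1eq : H1 = fun x => -((1/24) * Real.log (s x)) + (1/24) * (1 - s x) := by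
    funext z
    simp only [H1, s, one_div, Real.log_inv]
    ring
  have hH1 : ∀ y, y < (1/2:ℝ) → HasDerivAt H1
      ((1/24) * ((s y)^2)⁻¹ + (1/24) * ((s y)^1)⁻¹) y := by
    intro y hy
    rw [hH1eq]
    have hlog := (hasDerivAt_s hy).log (s_ne hy)
    have := ((hlog.const_mul (1/24:ℝ)).neg).add
      (((hasDerivAt_const y (1:ℝ)).sub (hasDerivAt_s hy)).const_mul (1/24:ℝ))
    have hne := s_ne hy
    refine this.congr_deriv ?_
    field_simp
    ring
  have hH1' : ∀ y, y < (1/2:ℝ) → HasDerivAt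
      (fun y => (1/24) * ((s y)^2)⁻¹ + (1/24) * ((s y)^1)⁻¹)
      ((1/12) * ((s y)^4)⁻¹ + (1/24) * ((s y)^3)⁻¹) y := by
    intro y hy
    have := ((hasDerivAt_s_pow_inv hy 2).const_mul (1/24:ℝ)).add
      ((hasDerivAt_s_pow_inv hy 1).const_mul (1/24:ℝ))
    refine this.congr_deriv ?_
    norm_num
    ring
  have hH1'' : ∀ y, y < (1/2:ℝ) → HasDerivAt
      (fun y => (1/12) * ((s y)^4)⁻¹ + (1/24) * ((s y)^3)⁻¹)
      ((1/3) * ((s y)^6)⁻¹ + (1/8) * ((s y)^5)⁻¹) y := by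
    intro y hy
    have := ((hasDerivAt_s_pow_inv hy 4).const_mul (1/12:ℝ)).add
      ((hasDerivAt_s_pow_inv hy 3).const_mul (1/24:ℝ))
    refine this.congr_deriv ?_
    norm_num
    ring
  have hH1''' : ∀ y, y < (1/2:ℝ) → HasDerivAt
      (fun y => (1/3) * ((s y)^6)⁻¹ + (1/8) * ((s y)^5)⁻¹)
      (2 * ((s y)^8)⁻¹ + (5/8) * ((s y)^7)⁻¹) y := by
    intro y hy
    have := ((hasDerivAt_s_pow_inv hy 6).const_mul (1/3:ℝ)).add
      ((hasDerivAt_s_pow_inv hy 5).const_mul (1/8:ℝ))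
    refine this.congr_deriv ?_
    norm_num
    ring
  -- H2
  have hH2eq : H2 = fun x => (7/1440) * ((s x)^5)⁻¹ + (5/1152) * ((s x)^4)⁻¹
      + (7/5760) * ((s x)^3)⁻¹ := by
    funext z
    simp only [H2, s, div_eq_mul_inv]
  have hH2 : ∀ y, y < (1/2:ℝ) → HasDerivAt H2
      ((7/288) * ((s y)^7)⁻¹ + (5/288) * ((s y)^6)⁻¹ + (7/1920) * ((s y)^5)⁻¹) y := by
    intro y hy
    rw [hH2eq]
    have := (((hasDerivAt_s_pow_inv hy 5).const_mul (7/1440:ℝ)).add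
      ((hasDerivAt_s_pow_inv hy 4).const_mul (5/1152:ℝ))).add
      ((hasDerivAt_s_pow_inv hy 3).const_mul (7/5760:ℝ))
    refine this.congr_deriv ?_
    norm_num
    ring
  have hH2' : ∀ y, y < (1/2:ℝ) → HasDerivAt
      (fun y => (7/288) * ((s y)^7)⁻¹ + (5/288) * ((s y)^6)⁻¹ + (7/1920) * ((s y)^5)⁻¹)
      ((49/288) * ((s y)^9)⁻¹ + (5/48) * ((s y)^8)⁻¹ + (7/384) * ((s y)^7)⁻¹) y := by
    intro y hy
    have := (((hasDerivAt_s_pow_inv hy 7).const_mul (7/288:ℝ)).add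
      ((hasDerivAt_s_pow_inv hy 6).const_mul (5/288:ℝ))).add
      ((hasDerivAt_s_pow_inv hy 5).const_mul (7/1920:ℝ))
    refine this.congr_deriv ?_
    norm_num
    ring
  -- assemble deriv formulas
  have d1H0 : ∀ y, y < (1/2:ℝ) → deriv H0 y = 1/6 - (s y)^2/2 + (s y)^3/3 :=
    fun y hy => (hH0 y hy).deriv
  have d2H0 := step d1H0 hH0'
  have d1H1 : ∀ y, y < (1/2:ℝ) → deriv H1 y = (1/24) * ((s y)^2)⁻¹ + (1/24) * ((s y)^1)⁻¹ :=
    fun y hy => (hH1 y hy).deriv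
  have d2H1 := step d1H1 hH1'
  have d3H1 := step d2H1 hH1''
  have d4H1 := step d3H1 hH1'''
  have d1H2 : ∀ y, y < (1/2:ℝ) → deriv H2 y
      = (7/288) * ((s y)^7)⁻¹ + (5/288) * ((s y)^6)⁻¹ + (7/1920) * ((s y)^5)⁻¹ :=
    fun y hy => (hH2 y hy).deriv
  have d2H2 := step d1H2 hH2'
  have e2H0 : iteratedDeriv 2 H0 x = 1 - s x := by
    rw [iteratedDeriv_succ, iteratedDeriv_one]; exact d2H0 x hx
  have e2H1 : iteratedDeriv 2 H1 x = (1/12) * ((s x)^4)⁻¹ + (1/24) * ((s x)^3)⁻¹ := by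
    rw [iteratedDeriv_succ, iteratedDeriv_one]; exact d2H1 x hx
  have e4H1 : iteratedDeriv 4 H1 x = 2 * ((s x)^8)⁻¹ + (5/8) * ((s x)^7)⁻¹ := by
    rw [iteratedDeriv_succ, iteratedDeriv_succ, iteratedDeriv_succ, iteratedDeriv_one]
    exact d4H1 x hx
  have e2H2 : iteratedDeriv 2 H2 x
      = (49/288) * ((s x)^9)⁻¹ + (5/48) * ((s x)^8)⁻¹ + (7/384) * ((s x)^7)⁻¹ := by
    rw [iteratedDeriv_succ, iteratedDeriv_one]; exact d2H2 x hx
  rw [e2H0, e2H1, e4H1, e2H2, d1H2 x hx]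
  have hne := s_ne hx
  have hsq := s_sq hx
  set t := s x with ht
  have hx2 : x = (1 - t^2)/2 := by linarith
  rw [hx2]
  field_simp
  ring
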